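/- Every u-convex function f : X → ℝ is subdifferentiable everywhere: for each x ∈ X there exists z ∈ Z with f(x) + f^♯(z) = u(x,z). -/

import Mathlib

noncomputable def sharpX {n m : ℕ} (u : EuclideanSpace ℝ (Fin n) → EuclideanSpace ℝ (Fin m) → ℝ)
    (X : Set (EuclideanSpace ℝ (Fin n))) (f : EuclideanSpace ℝ (Fin n) → EReal)
    (z : EuclideanSpace ℝ (Fin m)) : EReal :=
  ⨆ x ∈ X, ((u x z : EReal) - f x)

def UConvexX {n m : ℕ} (u : EuclideanSpace ℝ (Fin n) → EuclideanSpace ℝ (Fin m) → ℝ)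
    (X : Set (EuclideanSpace ℝ (Fin n))) (Z : Set (EuclideanSpace ℝ (Fin m)))
    (f : EuclideanSpace ℝ (Fin n) → EReal) : Prop :=
  ∃ A : Set (EuclideanSpace ℝ (Fin m) × ℝ), A.Nonempty ∧ (∀ q ∈ A, q.1 ∈ Z) ∧
    ∀ x ∈ X, f x = ⨆ q ∈ A, ((u x q.1 + q.2 : ℝ) : EReal)

/-- Every real-valued `u`-convex function on `X` is subdifferentiable everywhere on `X`. -/
theorem uconvex_subdifferentiable {n m : ℕ}
    (X : Set (EuclideanSpace ℝ (Fin n))) (Z : Set (EuclideanSpace ℝ (Fin m)))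
    (hX : IsCompact X) (hZ : IsCompact Z) (hXne : X.Nonempty) (hZne : Z.Nonempty)
    (u : EuclideanSpace ℝ (Fin n) → EuclideanSpace ℝ (Fin m) → ℝ)
    (hu : ContinuousOn (fun q => u q.1 q.2) (X ×ˢ Z))
    (f : EuclideanSpace ℝ (Fin n) → ℝ)
    (hconv : UConvexX u X Z (fun x => (f x : EReal))) :
    ∀ x ∈ X, ∃ z ∈ Z,
      (f x : EReal) + sharpX u X (fun x' => (f x' : EReal)) z = (u x z : EReal) := by
  intro x hx
  obtain ⟨A, hAne, hAZ, hA⟩ := hconv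
  beta_reduce at hA
  -- Step 1: approximate subgradients
  have key : ∀ k : ℕ, ∃ z ∈ Z, ∀ x' ∈ X,
      u x' z - f x' ≤ u x z - f x + 1 / (k + 1) := by
    intro k
    have hε : (0 : ℝ) < 1 / (k + 1) := by positivity
    have hfx := hA x hx
    have hlt : ((f x - 1 / (k + 1) : ℝ) : EReal) < ⨆ q ∈ A, ((u x q.1 + q.2 : ℝ) : EReal) := by
      rw [← hfx]
      exact_mod_cast sub_lt_self (f x) hε
    rw [lt_iSup_iff] at hlt
    obtain ⟨q, hlt⟩ := hlt
    rw [lt_iSup_iff] at hlt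
    obtain ⟨hqA, hlt⟩ := hlt
    have hlt' : f x - 1 / (k + 1) < u x q.1 + q.2 := by exact_mod_cast hlt
    refine ⟨q.1, hAZ q hqA, fun x' hx' => ?_⟩
    have hle : ((u x' q.1 + q.2 : ℝ) : EReal) ≤ ((f x' : ℝ) : EReal) := by
      rw [hA x' hx']
      exact le_iSup₂ (f := fun q' (_ : q' ∈ A) => ((u x' q'.1 + q'.2 : ℝ) : EReal)) q hqA
    have hle' : u x' q.1 + q.2 ≤ f x' := by exact_mod_cast hle
    linarith
  choose zs hzsZ hzs using key
  -- Step 2: extract convergent subsequence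
  obtain ⟨z, hzZ, φ, hφ, htend⟩ := hZ.tendsto_subseq hzsZ
  refine ⟨z, hzZ, ?_⟩
  -- continuity of u x' · on Z
  have hcont : ∀ x' ∈ X, ∀ z' ∈ Z, ContinuousWithinAt (fun w => u x' w) Z z' := by
    intro x' hx' z' hz'
    have : ContinuousOn (fun w => u x' w) Z := by
      have h1 : ContinuousOn (fun w : EuclideanSpace ℝ (Fin m) =>
          ((x', w) : EuclideanSpace ℝ (Fin n) × EuclideanSpace ℝ (Fin m))) Z :=
        (Continuous.prodMk_right x').continuousOn
      exact hu.comp h1 (fun w hw => ⟨hx', hw⟩)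
    exact this z' hz'
  have htendW : Filter.Tendsto (fun k => zs (φ k)) Filter.atTop (nhdsWithin z Z) :=
    tendsto_nhdsWithin_of_tendsto_nhds_of_eventually_within _ htend
      (Filter.Eventually.of_forall fun k => hzsZ (φ k))
  -- limit of the error term
  have herr : Filter.Tendsto (fun k : ℕ => (1 : ℝ) / (φ k + 1)) Filter.atTop (nhds 0) := by
    have := tendsto_one_div_add_atTop_nhds_zero_nat (𝕜 := ℝ)
    exact this.comp hφ.tendsto_atTop
  -- Step 3: pass to the limit for each x'
  have hlim : ∀ x' ∈ X, u x' z - f x' ≤ u x z - f x := by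
    intro x' hx'
    have h1 : Filter.Tendsto (fun k => u x' (zs (φ k)) - u x (zs (φ k)))
        Filter.atTop (nhds (u x' z - u x z)) :=
      (((hcont x' hx' z hzZ).tendsto.comp htendW).sub
        ((hcont x hx z hzZ).tendsto.comp htendW))
    have h2 : Filter.Tendsto (fun k : ℕ => f x' - f x + 1 / (φ k + 1))
        Filter.atTop (nhds (f x' - f x)) := by
      simpa using (tendsto_const_nhds (x := f x' - f x)).add herr
    have hle : ∀ k, u x' (zs (φ k)) - u x (zs (φ k)) ≤ f x' - f x + 1 / (φ k + 1) := by
      intro k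
      have := hzs (φ k) x' hx'
      push_cast
      linarith
    have := le_of_tendsto_of_tendsto' h1 h2 hle
    linarith
  -- Step 4: compute sharpX at z
  have hsharp : sharpX u X (fun x' => (f x' : EReal)) z = ((u x z - f x : ℝ) : EReal) := by
    unfold sharpX
    apply le_antisymm
    · refine iSup₂_le fun x' hx' => ?_
      rw [← EReal.coe_sub]
      exact_mod_cast hlim x' hx'
    · have := le_iSup₂ (f := fun x' (_ : x' ∈ X) => ((u x' z : EReal) - ((f x' : ℝ) : EReal))) x hx
      rwa [← EReal.coe_sub] at this
  rw [hsharp, ← EReal.coe_add]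
  norm_num
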